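/- Composition of asymptotically almost automorphic functions: Let F : ℝ × Y × Y → Y be continuous with decomposition F = G + I, where G : ℝ × Y × Y → Y is continuous and almost automorphic in its first variable and I : ℝ × Y × Y → Y is continuous with ‖I(s,x,y)‖ → 0 as s → +∞ uniformly for (x,y) in compact subsets of Y × Y. Suppose there is an almost automorphic function L_F : ℝ → [0,∞) such that both F and G satisfy ‖F(s,x₁,y₁) − F(s,x₂,y₂)‖ ≤ L_F(s)·(‖x₁−x₂‖ + ‖y₁−y₂‖) and ‖G(s,x₁,y₁) − G(s,x₂,y₂)‖ ≤ L_F(s)·(‖x₁−x₂‖ + ‖y₁−y₂‖) for all s ∈ ℝ, x_i, y_i ∈ Y. Then for any asymptotically almost automorphic functions x, y : ℝ → Y, the function Γ(s) = F(s, x(s), y(s)) is asymptotically almost automorphic. -/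

import Mathlib

open Filter Topology

/-- A continuous function `f : ℝ → Y` is almost automorphic if for every sequence of reals
there is a subsequence `(τ n)` and a function `f̄` such that `f (s + τ n) → f̄ s` and
`f̄ (s - τ n) → f s` pointwise. -/
def AlmostAutomorphic {Y : Type*} [NormedAddCommGroup Y] (f : ℝ → Y) : Prop :=
  Continuous f ∧
  ∀ s : ℕ → ℝ, ∃ (φ : ℕ → ℕ) (fbar : ℝ → Y), StrictMono φ ∧
    (∀ t : ℝ, Tendsto (fun n => f (t + s (φ n))) atTop (𝓝 (fbar t))) ∧
    (∀ t : ℝ, Tendsto (fun n => fbar (t - s (φ n))) atTop (𝓝 (f t)))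

/-- `f : ℝ → Y` is asymptotically almost automorphic if `f = g + φ` where `g` is almost
automorphic and `φ` is continuous with `‖φ s‖ → 0` as `s → +∞`. -/
def AsymptoticallyAlmostAutomorphic {Y : Type*} [NormedAddCommGroup Y] (f : ℝ → Y) : Prop :=
  ∃ g φ : ℝ → Y, AlmostAutomorphic g ∧ Continuous φ ∧
    Tendsto (fun s => ‖φ s‖) atTop (𝓝 0) ∧ ∀ s, f s = g s + φ s

/-- `F : ℝ × Y × Y → Y` is almost automorphic in its first variable. -/
def AlmostAutomorphicIn1 {Y : Type*} [NormedAddCommGroup Y] (F : ℝ → Y → Y → Y) : Prop :=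
  ∀ s : ℕ → ℝ, ∃ (φ : ℕ → ℕ) (Ftil : ℝ → Y → Y → Y), StrictMono φ ∧
    (∀ (t : ℝ) (x y : Y),
      Tendsto (fun n => F (t + s (φ n)) x y) atTop (𝓝 (Ftil t x y))) ∧
    (∀ (t : ℝ) (x y : Y),
      Tendsto (fun n => Ftil (t - s (φ n)) x y) atTop (𝓝 (F t x y)))

/-- Composition of asymptotically almost automorphic functions: if `F = G + I` where `G` is
continuous and almost automorphic in its first variable, `I` is continuous and vanishes at
`+∞` uniformly on compact subsets of `Y × Y`, and both `F` and `G` are Lipschitz in the last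
two variables with almost automorphic nonnegative coefficient `L_F`, then for asymptotically
almost automorphic `x, y : ℝ → Y` the function `s ↦ F s (x s) (y s)` is asymptotically
almost automorphic. -/
lemma aa_isCompact_closure_range {Y : Type*} [NormedAddCommGroup Y] [CompleteSpace Y]
    {f : ℝ → Y} (hf : AlmostAutomorphic f) :
    IsCompact (closure (Set.range f)) := by
  apply IsSeqCompact.isCompact
  intro u hu
  have h : ∀ n : ℕ, ∃ t : ℝ, dist (u n) (f t) < 1 / (n + 1) := by
    intro n
    have hmem := hu n
    rw [Metric.mem_closure_iff] at hmem
    obtain ⟨b, hb, hdb⟩ := hmem (1 / (n + 1)) (by positivity)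
    obtain ⟨t, rfl⟩ := hb
    exact ⟨t, hdb⟩
  choose t ht using h
  obtain ⟨φ, fbar, hφ, h1, h2⟩ := hf.2 t
  have hconv : Tendsto (fun n => f (t (φ n))) atTop (𝓝 (fbar 0)) := by
    simpa using h1 0
  refine ⟨fbar 0, mem_closure_of_tendsto hconv
      (Eventually.of_forall fun n => Set.mem_range_self _), φ, hφ, ?_⟩
  rw [tendsto_iff_dist_tendsto_zero]
  apply squeeze_zero (fun n => dist_nonneg)
    (g := fun n : ℕ => 1 / (n + 1 : ℝ) + dist (f (t (φ n))) (fbar 0))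
  · intro n
    calc dist ((u ∘ φ) n) (fbar 0) ≤ dist (u (φ n)) (f (t (φ n))) + dist (f (t (φ n))) (fbar 0) :=
          dist_triangle _ _ _
      _ ≤ 1 / (n + 1) + dist (f (t (φ n))) (fbar 0) := by
          refine add_le_add_left (le_trans (ht (φ n)).le ?_) _
          apply one_div_le_one_div_of_le (by positivity)
          have : (n : ℝ) ≤ φ n := by exact_mod_cast hφ.le_apply
          linarith
  · have : Tendsto (fun n : ℕ => dist (f (t (φ n))) (fbar 0)) atTop (𝓝 0) :=
      tendsto_iff_dist_tendsto_zero.mp hconv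
    simpa using (tendsto_one_div_add_atTop_nhds_zero_nat.add this)


theorem asymptoticallyAlmostAutomorphic_comp
    {Y : Type*} [NormedAddCommGroup Y] [NormedSpace ℝ Y] [CompleteSpace Y]
    (F G I : ℝ → Y → Y → Y)
    (hFcont : Continuous fun p : ℝ × Y × Y => F p.1 p.2.1 p.2.2)
    (hGcont : Continuous fun p : ℝ × Y × Y => G p.1 p.2.1 p.2.2)
    (hIcont : Continuous fun p : ℝ × Y × Y => I p.1 p.2.1 p.2.2)
    (hdecomp : ∀ (s : ℝ) (x y : Y), F s x y = G s x y + I s x y)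
    (hGaa : AlmostAutomorphicIn1 G)
    (hIvanish : ∀ K : Set (Y × Y), IsCompact K → ∀ ε > 0, ∃ s₀ : ℝ,
      ∀ s ≥ s₀, ∀ p ∈ K, ‖I s p.1 p.2‖ ≤ ε)
    (LF : ℝ → ℝ) (hLF0 : ∀ s, 0 ≤ LF s) (hLFaa : AlmostAutomorphic LF)
    (hFlip : ∀ (s : ℝ) (x₁ x₂ y₁ y₂ : Y),
      ‖F s x₁ y₁ - F s x₂ y₂‖ ≤ LF s * (‖x₁ - x₂‖ + ‖y₁ - y₂‖))
    (hGlip : ∀ (s : ℝ) (x₁ x₂ y₁ y₂ : Y),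
      ‖G s x₁ y₁ - G s x₂ y₂‖ ≤ LF s * (‖x₁ - x₂‖ + ‖y₁ - y₂‖))
    (x y : ℝ → Y)
    (hx : AsymptoticallyAlmostAutomorphic x) (hy : AsymptoticallyAlmostAutomorphic y) :
    AsymptoticallyAlmostAutomorphic (fun s => F s (x s) (y s)) := by
  obtain ⟨x₁, p₁, hx₁aa, hp₁c, hp₁0, hxeq⟩ := hx
  obtain ⟨y₁, p₂, hy₁aa, hp₂c, hp₂0, hyeq⟩ := hy
  obtain ⟨M, hM⟩ := isBounded_iff_forall_norm_le.mp
    (aa_isCompact_closure_range hLFaa).isBounded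
  have hLFM : ∀ s, LF s ≤ M := by
    intro s
    have := hM (LF s) (subset_closure (Set.mem_range_self s))
    rwa [Real.norm_eq_abs, abs_of_nonneg (hLF0 s)] at this
  set g : ℝ → Y := fun s => G s (x₁ s) (y₁ s) with hg
  have hgcont : Continuous g :=
    hGcont.comp (continuous_id.prodMk (hx₁aa.1.prodMk hy₁aa.1))
  have hxc : Continuous x := by
    have hx' : x = fun s => x₁ s + p₁ s := funext hxeq
    rw [hx']; exact hx₁aa.1.add hp₁c
  have hyc : Continuous y := by
    have hy' : y = fun s => y₁ s + p₂ s := funext hyeq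
    rw [hy']; exact hy₁aa.1.add hp₂c
  have hgaa : AlmostAutomorphic g := by
    refine ⟨hgcont, fun s => ?_⟩
    obtain ⟨α, Gt, hα, hG1, hG2⟩ := hGaa s
    obtain ⟨β, xb, hβ, hx1, hx2⟩ := hx₁aa.2 (fun n => s (α n))
    obtain ⟨γ, yb, hγ, hy1, hy2⟩ := hy₁aa.2 (fun n => s (α (β n)))
    obtain ⟨δ, Lb, hδ, hL1, hL2⟩ := hLFaa.2 (fun n => s (α (β (γ n))))
    set ψ : ℕ → ℕ := fun n => α (β (γ (δ n))) with hψ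
    have hψm : StrictMono ψ := fun a b h => hα (hβ (hγ (hδ h)))
    have hsub3 : Tendsto (fun n => β (γ (δ n))) atTop atTop :=
      (hβ.comp (hγ.comp hδ)).tendsto_atTop
    have hsub2 : Tendsto (fun n => γ (δ n)) atTop atTop := (hγ.comp hδ).tendsto_atTop
    have hG1' : ∀ (t : ℝ) (a b : Y),
        Tendsto (fun n => G (t + s (ψ n)) a b) atTop (𝓝 (Gt t a b)) :=
      fun t a b => (hG1 t a b).comp hsub3
    have hG2' : ∀ (t : ℝ) (a b : Y),
        Tendsto (fun n => Gt (t - s (ψ n)) a b) atTop (𝓝 (G t a b)) :=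
      fun t a b => (hG2 t a b).comp hsub3
    have hx1' : ∀ t, Tendsto (fun n => x₁ (t + s (ψ n))) atTop (𝓝 (xb t)) :=
      fun t => (hx1 t).comp hsub2
    have hx2' : ∀ t, Tendsto (fun n => xb (t - s (ψ n))) atTop (𝓝 (x₁ t)) :=
      fun t => (hx2 t).comp hsub2
    have hy1' : ∀ t, Tendsto (fun n => y₁ (t + s (ψ n))) atTop (𝓝 (yb t)) :=
      fun t => (hy1 t).comp hδ.tendsto_atTop
    have hy2' : ∀ t, Tendsto (fun n => yb (t - s (ψ n))) atTop (𝓝 (y₁ t)) :=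
      fun t => (hy2 t).comp hδ.tendsto_atTop
    have hGtlip : ∀ (t : ℝ) (a₁ a₂ b₁ b₂ : Y),
        ‖Gt t a₁ b₁ - Gt t a₂ b₂‖ ≤ Lb t * (‖a₁ - a₂‖ + ‖b₁ - b₂‖) := by
      intro t a₁ a₂ b₁ b₂
      refine le_of_tendsto_of_tendsto' (((hG1' t a₁ b₁).sub (hG1' t a₂ b₂)).norm)
        ((hL1 t).mul_const _) (fun n => hGlip _ _ _ _ _)
    refine ⟨ψ, fun t => Gt t (xb t) (yb t), hψm, ?_, ?_⟩
    · intro t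
      rw [tendsto_iff_norm_sub_tendsto_zero]
      apply squeeze_zero (fun n => norm_nonneg _)
        (g := fun n : ℕ =>
          LF (t + s (ψ n)) * (‖x₁ (t + s (ψ n)) - xb t‖ + ‖y₁ (t + s (ψ n)) - yb t‖)
            + ‖G (t + s (ψ n)) (xb t) (yb t) - Gt t (xb t) (yb t)‖)
      · intro n
        calc ‖g (t + s (ψ n)) - Gt t (xb t) (yb t)‖
            ≤ ‖G (t + s (ψ n)) (x₁ (t + s (ψ n))) (y₁ (t + s (ψ n)))
                  - G (t + s (ψ n)) (xb t) (yb t)‖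
                + ‖G (t + s (ψ n)) (xb t) (yb t) - Gt t (xb t) (yb t)‖ := by
              simpa [hg] using norm_sub_le_norm_sub_add_norm_sub
                (G (t + s (ψ n)) (x₁ (t + s (ψ n))) (y₁ (t + s (ψ n))))
                (G (t + s (ψ n)) (xb t) (yb t)) (Gt t (xb t) (yb t))
          _ ≤ _ := add_le_add_left (hGlip _ _ _ _ _) _
      · have h1 := (hL1 t).mul
          ((tendsto_iff_norm_sub_tendsto_zero.mp (hx1' t)).add
            (tendsto_iff_norm_sub_tendsto_zero.mp (hy1' t)))
        have h2 := tendsto_iff_norm_sub_tendsto_zero.mp (hG1' t (xb t) (yb t))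
        simpa using h1.add h2
    · intro t
      rw [tendsto_iff_norm_sub_tendsto_zero]
      apply squeeze_zero (fun n => norm_nonneg _)
        (g := fun n : ℕ =>
          Lb (t - s (ψ n)) * (‖xb (t - s (ψ n)) - x₁ t‖ + ‖yb (t - s (ψ n)) - y₁ t‖)
            + ‖Gt (t - s (ψ n)) (x₁ t) (y₁ t) - G t (x₁ t) (y₁ t)‖)
      · intro n
        calc ‖Gt (t - s (ψ n)) (xb (t - s (ψ n))) (yb (t - s (ψ n))) - g t‖
            ≤ ‖Gt (t - s (ψ n)) (xb (t - s (ψ n))) (yb (t - s (ψ n)))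
                  - Gt (t - s (ψ n)) (x₁ t) (y₁ t)‖
                + ‖Gt (t - s (ψ n)) (x₁ t) (y₁ t) - G t (x₁ t) (y₁ t)‖ := by
              simpa [hg] using norm_sub_le_norm_sub_add_norm_sub
                (Gt (t - s (ψ n)) (xb (t - s (ψ n))) (yb (t - s (ψ n))))
                (Gt (t - s (ψ n)) (x₁ t) (y₁ t)) (G t (x₁ t) (y₁ t))
          _ ≤ _ := add_le_add_left (hGtlip _ _ _ _ _) _
      · have h1 := (hL2 t).mul
          ((tendsto_iff_norm_sub_tendsto_zero.mp (hx2' t)).add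
            (tendsto_iff_norm_sub_tendsto_zero.mp (hy2' t)))
        have h2 := tendsto_iff_norm_sub_tendsto_zero.mp (hG2' t (x₁ t) (y₁ t))
        simpa using h1.add h2
  set r : ℝ → Y := fun s => F s (x s) (y s) - g s with hr
  have hrc : Continuous r :=
    (hFcont.comp (continuous_id.prodMk (hxc.prodMk hyc))).sub hgcont
  set K : Set (Y × Y) := closure (Set.range x₁) ×ˢ closure (Set.range y₁) with hK
  have hKc : IsCompact K :=
    (aa_isCompact_closure_range hx₁aa).prod (aa_isCompact_closure_range hy₁aa)
  have hmemK : ∀ s, (x₁ s, y₁ s) ∈ K := fun s =>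
    ⟨subset_closure (Set.mem_range_self s), subset_closure (Set.mem_range_self s)⟩
  have hI0 : Tendsto (fun s => ‖I s (x₁ s) (y₁ s)‖) atTop (𝓝 0) := by
    rw [Metric.tendsto_atTop]
    intro ε hε
    obtain ⟨s₀, hs₀⟩ := hIvanish K hKc (ε / 2) (by linarith)
    refine ⟨s₀, fun s hs => ?_⟩
    rw [Real.dist_eq, sub_zero, abs_of_nonneg (norm_nonneg _)]
    exact lt_of_le_of_lt (hs₀ s hs (x₁ s, y₁ s) (hmemK s)) (by linarith)
  have hrb : ∀ s, ‖r s‖ ≤ M * (‖p₁ s‖ + ‖p₂ s‖) + ‖I s (x₁ s) (y₁ s)‖ := by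
    intro s
    have heq : r s = (F s (x s) (y s) - F s (x₁ s) (y₁ s)) + I s (x₁ s) (y₁ s) := by
      have hd := hdecomp s (x₁ s) (y₁ s)
      simp only [hr, hg]
      rw [hd]; abel
    rw [heq]
    have hx' : x s - x₁ s = p₁ s := by rw [hxeq s]; abel
    have hy' : y s - y₁ s = p₂ s := by rw [hyeq s]; abel
    calc ‖(F s (x s) (y s) - F s (x₁ s) (y₁ s)) + I s (x₁ s) (y₁ s)‖
        ≤ ‖F s (x s) (y s) - F s (x₁ s) (y₁ s)‖ + ‖I s (x₁ s) (y₁ s)‖ := norm_add_le _ _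
      _ ≤ LF s * (‖x s - x₁ s‖ + ‖y s - y₁ s‖) + ‖I s (x₁ s) (y₁ s)‖ :=
          add_le_add_left (hFlip s _ _ _ _) _
      _ ≤ M * (‖p₁ s‖ + ‖p₂ s‖) + ‖I s (x₁ s) (y₁ s)‖ := by
          rw [hx', hy']
          exact add_le_add_left
            (mul_le_mul_of_nonneg_right (hLFM s) (by positivity)) _
  have hr0 : Tendsto (fun s => ‖r s‖) atTop (𝓝 0) := by
    apply squeeze_zero (fun s => norm_nonneg _) hrb
    have h := ((hp₁0.add hp₂0).const_mul M).add hI0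
    simpa using h
  exact ⟨g, r, hgaa, hrc, hr0, fun s => by simp [hr]⟩
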